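/- Let r ≥ 5 and p an odd prime not dividing r. With V and Δ as in the deleted permutation module setting, the smallest positive integer m such that m·(Δ ∪ {0}) = V satisfies m ≥ (p−1)(r−1)/4. -/
import Mathlib


open Pointwise

/-- The `n`-fold sumset of a set in an additive group (`foldAdd 0 Δ = {0}`). -/
def foldAdd {V : Type*} [AddCommGroup V] : ℕ → Set V → Set V
  | 0, _ => {0}
  | n + 1, Δ => foldAdd n Δ + Δ

/-- The "norm" on `ZMod p`: absolute value of the minimal representative. -/
private def znorm {p : ℕ} (a : ZMod p) : ℕ := a.valMinAbs.natAbs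

private lemma znorm_add_le {p : ℕ} [NeZero p] (a b : ZMod p) :
    znorm (a + b) ≤ znorm a + znorm b := by
  have he : ((a.valMinAbs + b.valMinAbs : ℤ) : ZMod p) = ((a + b).valMinAbs : ZMod p) := by
    push_cast [ZMod.coe_valMinAbs]
    ring
  have h1 : (a + b).valMinAbs.natAbs ≤ (a.valMinAbs + b.valMinAbs).natAbs :=
    ZMod.natAbs_min_of_le_div_two p _ _ he.symm (ZMod.natAbs_valMinAbs_le _)
  calc znorm (a + b) ≤ (a.valMinAbs + b.valMinAbs).natAbs := h1
    _ ≤ a.valMinAbs.natAbs + b.valMinAbs.natAbs := Int.natAbs_add_le _ _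
    _ = znorm a + znorm b := rfl

private lemma weight_foldAdd {p r : ℕ} [NeZero p] (S : Set (Fin r → ZMod p))
    (hS : ∀ s ∈ S, ∑ k, znorm (s k) ≤ 2) :
    ∀ n, ∀ x ∈ foldAdd n S, ∑ k, znorm (x k) ≤ 2 * n := by
  intro n
  induction n with
  | zero =>
    intro x hx
    simp only [foldAdd, Set.mem_singleton_iff] at hx
    subst hx
    simp [znorm]
  | succ n ih =>
    intro x hx
    obtain ⟨y, hy, s, hs, rfl⟩ := hx
    calc ∑ k, znorm ((y + s) k) ≤ ∑ k, (znorm (y k) + znorm (s k)) :=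
          Finset.sum_le_sum fun k _ => znorm_add_le _ _
      _ = (∑ k, znorm (y k)) + ∑ k, znorm (s k) := Finset.sum_add_distrib
      _ ≤ 2 * n + 2 := add_le_add (ih y hy) (hS s hs)
      _ = 2 * (n + 1) := by ring

theorem stmt_14 (p r m : ℕ) [Fact p.Prime] (hp : Odd p) (hr : 5 ≤ r)
    (hpr : ¬ p ∣ r)
    (hm : IsLeast {n | 0 < n ∧ foldAdd n
      ({x : Fin r → ZMod p | ∃ i j : Fin r, i ≠ j ∧
          x = (Pi.single i (1 : ZMod p) : Fin r → ZMod p) -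
            (Pi.single j (1 : ZMod p) : Fin r → ZMod p)} ∪ {0}) =
        {x : Fin r → ZMod p | ∑ k, x k = 0}} m) :
    (p - 1) * (r - 1) ≤ 4 * m := by
  have hprime : p.Prime := Fact.out
  have hp3 : 3 ≤ p := by
    rcases hp with ⟨t, ht⟩
    have := hprime.two_le
    omega
  haveI : NeZero p := ⟨by omega⟩
  obtain ⟨⟨hm0, heq⟩, -⟩ := hm
  set c : ℕ := (p - 1) / 2 with hc
  have hch : c ≤ p / 2 := by omega
  -- the element 1 and -1 have norm 1
  have hn1 : znorm (1 : ZMod p) = 1 := by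
    have : ((1 : ℕ) : ZMod p).valMinAbs = 1 := by
      rw [ZMod.valMinAbs_natCast_of_le_half (by omega)]
      norm_num
    simpa [znorm] using congrArg Int.natAbs this
  have hnneg1 : znorm (-1 : ZMod p) = 1 := by
    rw [znorm, ZMod.natAbs_valMinAbs_neg]; exact hn1
  -- every element of the generating set has weight ≤ 2
  have hS : ∀ s ∈ ({x : Fin r → ZMod p | ∃ i j : Fin r, i ≠ j ∧
      x = (Pi.single i (1 : ZMod p) : Fin r → ZMod p) -
        (Pi.single j (1 : ZMod p) : Fin r → ZMod p)} ∪ {0}),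
      ∑ k, znorm (s k) ≤ 2 := by
    rintro s (⟨i, j, hij, rfl⟩ | hs)
    · have hsub : ({i, j} : Finset (Fin r)) ⊆ Finset.univ := Finset.subset_univ _
      have hzero : ∀ k ∈ Finset.univ, k ∉ ({i, j} : Finset (Fin r)) →
          znorm (((Pi.single i (1 : ZMod p) : Fin r → ZMod p) - (Pi.single j (1 : ZMod p) : Fin r → ZMod p)) k) = 0 := by
        intro k _ hk
        simp only [Finset.mem_insert, Finset.mem_singleton, not_or] at hk
        simp [Pi.single_apply, hk.1, hk.2, znorm]
      rw [← Finset.sum_subset hsub hzero, Finset.sum_pair hij]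
      have h1 : ((Pi.single i (1 : ZMod p) : Fin r → ZMod p) - (Pi.single j (1 : ZMod p) : Fin r → ZMod p)) i = 1 := by
        simp [Pi.single_apply, hij]
      have h2 : ((Pi.single i (1 : ZMod p) : Fin r → ZMod p) - (Pi.single j (1 : ZMod p) : Fin r → ZMod p)) j = -1 := by
        simp [Pi.single_apply, hij.symm]
      rw [h1, h2, hn1, hnneg1]
    · simp only [Set.mem_singleton_iff] at hs
      subst hs
      simp [znorm]
  -- the target vector
  set i0 : Fin r := ⟨0, by omega⟩ with hi0
  set v : Fin r → ZMod p :=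
    (fun _ => (c : ZMod p)) - Pi.single i0 ((r * c : ℕ) : ZMod p) with hv
  have hvsum : ∑ k, v k = 0 := by
    rw [hv]
    simp only [Pi.sub_apply, Finset.sum_sub_distrib, Finset.sum_const,
      Finset.card_univ, Fintype.card_fin]
    rw [Finset.sum_pi_single']
    simp [Finset.mem_univ, nsmul_eq_mul]
  have hvmem : v ∈ foldAdd m
      ({x : Fin r → ZMod p | ∃ i j : Fin r, i ≠ j ∧
          x = (Pi.single i (1 : ZMod p) : Fin r → ZMod p) -
            (Pi.single j (1 : ZMod p) : Fin r → ZMod p)} ∪ {0}) := by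
    rw [heq]; exact hvsum
  have hub : ∑ k, znorm (v k) ≤ 2 * m := weight_foldAdd _ hS m v hvmem
  -- lower bound on the weight of v
  have hvk : ∀ k : Fin r, k ≠ i0 → znorm (v k) = c := by
    intro k hk
    have : v k = (c : ZMod p) := by
      simp [hv, Pi.single_apply, hk]
    rw [this, znorm, ZMod.valMinAbs_natCast_of_le_half hch]
    exact Int.natAbs_natCast c
  have hlb : (r - 1) * c ≤ ∑ k, znorm (v k) := by
    have hsub : Finset.univ.erase i0 ⊆ Finset.univ := Finset.subset_univ _
    have : ∑ k ∈ Finset.univ.erase i0, znorm (v k) ≤ ∑ k, znorm (v k) :=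
      Finset.sum_le_sum_of_subset hsub
    have heval : ∑ k ∈ Finset.univ.erase i0, znorm (v k) = (r - 1) * c := by
      rw [Finset.sum_congr rfl fun k hk => hvk k (Finset.ne_of_mem_erase hk)]
      rw [Finset.sum_const, Finset.card_erase_of_mem (Finset.mem_univ _),
        Finset.card_univ, Fintype.card_fin, smul_eq_mul]
    omega
  -- conclude
  have h2c : 2 * c = p - 1 := by
    rcases hp with ⟨t, ht⟩
    omega
  nlinarith [hlb, hub]
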